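/- Let X = (X₁,...,X_m) be a non-degenerate wide-sense multi-self-similar ℝ^m-valued random field on T = [0,∞)^d with scaling functions f = (f₁,...,f_m) and shift functions g = (g₁,...,g_m). Then there exist nonnegative reals H_i^{(j)} with f_j(a) = ∏_{i=1}^d a_i^{H_i^{(j)}} for all a ∈ (0,∞)^d, and for every j such that the vector H^{(j)} = (H₁^{(j)},...,H_d^{(j)}) is not identically zero, there is a constant D_j ∈ ℝ such that g_j(a) = D_j(1 − f_j(a)) for all a ∈ (0,∞)^d and X_j(0) = D_j almost surely. -/

import Mathlib

open MeasureTheory Filter Topology Set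
open scoped ENNReal

set_option linter.unusedVariables false
set_option linter.unusedSectionVars false
set_option maxHeartbeats 1000000

lemma dirac_of_flat (μ : Measure ℝ) [IsProbabilityMeasure μ] {p : ℝ}
    (h0 : ∀ y, y < p → μ (Set.Iic y) = 0) (h1 : ∀ y, p < y → μ (Set.Iic y) = 1) :
    μ {p} = 1 := by
  have hIio : μ (Set.Iio p) = 0 := by
    have : Set.Iio p = ⋃ n : ℕ, Set.Iic (p - 1 / (n + 1)) := by
      ext x
      simp only [Set.mem_Iio, Set.mem_iUnion, Set.mem_Iic]
      constructor
      · intro hx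
        obtain ⟨n, hn⟩ := exists_nat_one_div_lt (sub_pos.2 hx)
        exact ⟨n, by push_cast at hn ⊢; linarith⟩
      · intro ⟨n, hn⟩
        have : 0 < 1 / ((n : ℝ) + 1) := by positivity
        linarith
    rw [this]
    exact measure_iUnion_null fun n => h0 _ (by
      have : 0 < 1 / ((n : ℝ) + 1) := by positivity
      linarith)
  have hIic : μ (Set.Iic p) = 1 := by
    have hinter : ⋂ n : ℕ, Set.Iic (p + 1 / (n + 1)) = Set.Iic p := by
      ext x
      simp only [Set.mem_iInter, Set.mem_Iic]
      constructor
      · intro hx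
        by_contra hc
        push_neg at hc
        obtain ⟨n, hn⟩ := exists_nat_one_div_lt (sub_pos.2 hc)
        have := hx n
        push_cast at hn
        linarith
      · intro hx n
        have : 0 < 1 / ((n : ℝ) + 1) := by positivity
        linarith
    have htd := tendsto_measure_iInter_atTop (μ := μ)
      (s := fun n : ℕ => Set.Iic (p + 1 / (n + 1)))
      (fun n => measurableSet_Iic.nullMeasurableSet)
      (fun n k hnk => Set.Iic_subset_Iic.2 (by
        have h1 : (1:ℝ) / (k + 1) ≤ 1 / (n + 1) := by
          apply one_div_le_one_div_of_le (by positivity)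
          exact_mod_cast by omega
        linarith))
      ⟨0, measure_ne_top μ _⟩
    rw [hinter] at htd
    have hconst : (fun n : ℕ => μ (Set.Iic (p + 1 / (n + 1)))) = fun _ => 1 := by
      funext n
      exact h1 _ (by
        have : 0 < 1 / ((n : ℝ) + 1) := by positivity
        linarith)
    rw [show (μ ∘ fun n : ℕ => Set.Iic (p + 1 / (n + 1)))
        = fun n : ℕ => μ (Set.Iic (p + 1 / (n + 1))) from rfl, hconst] at htd
    exact tendsto_nhds_unique htd tendsto_const_nhds
  have : μ (Set.Iic p \ Set.Iio p) = 1 := by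
    rw [measure_diff Set.Iio_subset_Iic_self measurableSet_Iio.nullMeasurableSet
      (measure_ne_top μ _), hIio, hIic]
    simp
  rwa [Set.Iic_diff_Iio_same] at this

lemma iic_tendsto_top (μ : Measure ℝ) [IsProbabilityMeasure μ] (v : ℕ → ℝ)
    (hv : Monotone v) (hvtop : Tendsto v atTop atTop) :
    Tendsto (fun n => μ (Set.Iic (v n))) atTop (𝓝 1) := by
  have h := tendsto_measure_iUnion_atTop (μ := μ) (s := fun n => Set.Iic (v n))
    (fun n k hnk => Set.Iic_subset_Iic.2 (hv hnk))
  have hU : ⋃ n, Set.Iic (v n) = Set.univ := by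
    ext x
    simp only [Set.mem_iUnion, Set.mem_Iic, Set.mem_univ, iff_true]
    obtain ⟨n, hn⟩ := (hvtop.eventually (eventually_ge_atTop x)).exists
    exact ⟨n, hn⟩
  rw [hU, measure_univ] at h
  exact h

lemma iic_tendsto_bot (μ : Measure ℝ) [IsProbabilityMeasure μ] (v : ℕ → ℝ)
    (hv : Antitone v) (hvbot : Tendsto v atTop atBot) :
    Tendsto (fun n => μ (Set.Iic (v n))) atTop (𝓝 0) := by
  have h := tendsto_measure_iInter_atTop (μ := μ) (s := fun n => Set.Iic (v n))
    (fun n => measurableSet_Iic.nullMeasurableSet)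
    (fun n k hnk => Set.Iic_subset_Iic.2 (hv hnk)) ⟨0, measure_ne_top μ _⟩
  have hU : ⋂ n, Set.Iic (v n) = ∅ := by
    ext x
    simp only [Set.mem_iInter, Set.mem_Iic, Set.mem_empty_iff_false, iff_false, not_forall,
      not_le]
    obtain ⟨n, hn⟩ := (hvbot.eventually (eventually_lt_atBot x)).exists
    exact ⟨n, hn⟩
  rw [hU, measure_empty] at h
  exact h

lemma inv_translate (μ : Measure ℝ) [IsProbabilityMeasure μ] {c : ℝ}
    (h : ∀ y, μ (Set.Iic y) = μ (Set.Iic (y + c))) (hc : c ≠ 0) : False := by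
  have key : ∀ y : ℝ, ∀ n : ℕ, μ (Set.Iic y) = μ (Set.Iic (y + n * c)) := by
    intro y n
    induction n with
    | zero => simp
    | succ k ih =>
      rw [ih, h (y + k * c)]
      push_cast
      ring_nf
  rcases lt_or_gt_of_ne hc with hneg | hpos
  · -- c < 0 : μ (Iic y) = 0 for all y, contradiction with tendsto to 1
    have hzero : ∀ y, μ (Set.Iic y) = 0 := by
      intro y
      have htd : Tendsto (fun n : ℕ => μ (Set.Iic (y + n * c))) atTop (𝓝 0) := by
        apply iic_tendsto_bot
        · intro a b hab
          simp only
          have : (b : ℝ) * c ≤ (a : ℝ) * c := by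
            apply mul_le_mul_of_nonpos_right _ hneg.le
            exact_mod_cast hab
          linarith
        · apply tendsto_atBot_add_const_left
          have : Tendsto (fun n : ℕ => (n : ℝ)) atTop atTop := tendsto_natCast_atTop_atTop
          exact Tendsto.atTop_mul_const_of_neg hneg this
      have : (fun n : ℕ => μ (Set.Iic (y + n * c))) = fun _ => μ (Set.Iic y) := by
        funext n; exact (key y n).symm
      rw [this] at htd
      exact tendsto_nhds_unique (tendsto_const_nhds : Tendsto (fun _ : ℕ => μ (Set.Iic y)) atTop _) htd
    have htop := iic_tendsto_top μ (fun n => (n : ℝ)) (fun a b hab => by simp only; exact_mod_cast hab)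
      tendsto_natCast_atTop_atTop
    have : (fun n : ℕ => μ (Set.Iic (n : ℝ))) = fun _ => 0 := by funext n; exact hzero _
    rw [this] at htop
    have := tendsto_nhds_unique htop tendsto_const_nhds
    simp at this
  · -- c > 0 : μ (Iic y) = 1 for all y
    have hone : ∀ y, μ (Set.Iic y) = 1 := by
      intro y
      have htd : Tendsto (fun n : ℕ => μ (Set.Iic (y + n * c))) atTop (𝓝 1) := by
        apply iic_tendsto_top
        · intro a b hab
          simp only
          have : (a : ℝ) * c ≤ (b : ℝ) * c := by
            apply mul_le_mul_of_nonneg_right _ hpos.le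
            exact_mod_cast hab
          linarith
        · apply tendsto_atTop_add_const_left
          exact Tendsto.atTop_mul_const hpos tendsto_natCast_atTop_atTop
      have : (fun n : ℕ => μ (Set.Iic (y + n * c))) = fun _ => μ (Set.Iic y) := by
        funext n; exact (key y n).symm
      rw [this] at htd
      exact tendsto_nhds_unique (tendsto_const_nhds : Tendsto (fun _ : ℕ => μ (Set.Iic y)) atTop _) htd
    have hbot := iic_tendsto_bot μ (fun n => -(n : ℝ))
      (fun a b hab => by simp only [neg_le_neg_iff]; exact_mod_cast hab)
      (tendsto_neg_atBot_iff.2 tendsto_natCast_atTop_atTop)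
    have : (fun n : ℕ => μ (Set.Iic (-(n : ℝ)))) = fun _ => 1 := by funext n; exact hone _
    rw [this] at hbot
    have := tendsto_nhds_unique hbot tendsto_const_nhds
    simp at this

lemma inv_scale_lt (μ : Measure ℝ) [IsProbabilityMeasure μ] {l c : ℝ}
    (hl0 : 0 < l) (hl1 : l < 1) (h : ∀ y, μ (Set.Iic y) = μ (Set.Iic (l * y + c))) :
    μ {c / (1 - l)} = 1 := by
  set p : ℝ := c / (1 - l) with hp
  have hlne : (1 : ℝ) - l ≠ 0 := by linarith
  have hfix : l * p + c = p := by
    rw [hp, div_eq_mul_inv]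
    have h := mul_inv_cancel₀ hlne
    linear_combination (-c) * h
  set φ : ℕ → ℝ → ℝ := fun n y => l ^ n * (y - p) + p with hφ
  have hφstep : ∀ n y, l * φ n y + c = φ (n + 1) y := by
    intro n y
    have : l * (l ^ n * (y - p) + p) + c = l ^ (n + 1) * (y - p) + (l * p + c) := by ring
    simp only [hφ]
    rw [this, hfix]
  have hkey : ∀ n y, μ (Set.Iic y) = μ (Set.Iic (φ n y)) := by
    intro n y
    induction n with
    | zero => simp [hφ]
    | succ k ih => rw [ih, h (φ k y), hφstep k y]
  have hφtd : ∀ y, Tendsto (fun n => φ n y) atTop (𝓝 p) := by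
    intro y
    have : Tendsto (fun n : ℕ => l ^ n * (y - p)) atTop (𝓝 0) := by
      simpa using (tendsto_pow_atTop_nhds_zero_of_lt_one hl0.le hl1).mul_const (y - p)
    simpa using this.add_const p
  -- above p
  have hA : ∀ y, p < y → μ (Set.Iic y) = μ (Set.Iic p) := by
    intro y hy
    have hmono : Antitone fun n : ℕ => φ n y := by
      intro a b hab
      simp only [hφ]
      have : l ^ b ≤ l ^ a := pow_le_pow_of_le_one hl0.le hl1.le hab
      nlinarith
    have hinter : ⋂ n, Set.Iic (φ n y) = Set.Iic p := by
      ext x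
      simp only [Set.mem_iInter, Set.mem_Iic]
      constructor
      · intro hx
        exact ge_of_tendsto (hφtd y) (Eventually.of_forall hx)
      · intro hx n
        have : p ≤ φ n y := by
          simp only [hφ]
          nlinarith [pow_pos hl0 n]
        linarith
    have htd := tendsto_measure_iInter_atTop (μ := μ) (s := fun n => Set.Iic (φ n y))
      (fun n => measurableSet_Iic.nullMeasurableSet)
      (fun a b hab => Set.Iic_subset_Iic.2 (hmono hab)) ⟨0, measure_ne_top μ _⟩
    rw [hinter] at htd
    have : (⇑μ ∘ fun n => Set.Iic (φ n y)) = fun _ : ℕ => μ (Set.Iic y) := by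
      funext n; exact (hkey n y).symm
    rw [this] at htd
    exact tendsto_nhds_unique (tendsto_const_nhds : Tendsto (fun _ : ℕ => μ (Set.Iic y)) atTop _) htd
  -- below p: all equal
  have hB1 : ∀ y z, y ≤ z → z < p → μ (Set.Iic y) = μ (Set.Iic z) := by
    intro y z hyz hzp
    rcases eq_or_lt_of_le hyz with rfl | hylt
    · rfl
    refine le_antisymm (measure_mono (Set.Iic_subset_Iic.2 hyz)) ?_
    have hyp : y < p := lt_trans hylt hzp
    obtain ⟨n, hn⟩ := ((hφtd y).eventually (eventually_gt_nhds hzp)).exists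
    calc μ (Set.Iic z) ≤ μ (Set.Iic (φ n y)) := measure_mono (Set.Iic_subset_Iic.2 hn.le)
    _ = μ (Set.Iic y) := (hkey n y).symm
  have hB : ∀ y, y < p → μ (Set.Iic y) = 0 := by
    intro y hy
    have hconst : ∀ n : ℕ, μ (Set.Iic (y - n)) = μ (Set.Iic y) := by
      intro n
      exact hB1 (y - n) y (by have := (Nat.cast_nonneg n : (0:ℝ) ≤ n); linarith) hy
    have hbot := iic_tendsto_bot μ (fun n => y - n)
      (fun a b hab => by simp only; have : (a:ℝ) ≤ b := Nat.cast_le.mpr hab; linarith)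
      (tendsto_atBot_add_const_left _ y (tendsto_neg_atBot_iff.2 tendsto_natCast_atTop_atTop))
    have : (fun n : ℕ => μ (Set.Iic (y - n))) = fun _ => μ (Set.Iic y) := by
      funext n; exact hconst n
    rw [this] at hbot
    exact tendsto_nhds_unique (tendsto_const_nhds : Tendsto (fun _ : ℕ => μ (Set.Iic y)) atTop _) hbot
  -- value at p is 1
  have hC : ∀ y, p < y → μ (Set.Iic y) = 1 := by
    have hup := iic_tendsto_top μ (fun n => p + 1 + n)
      (fun a b hab => by simp only; have : (a:ℝ) ≤ b := Nat.cast_le.mpr hab; linarith)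
      (tendsto_atTop_add_const_left _ (p+1) tendsto_natCast_atTop_atTop)
    have hval : μ (Set.Iic p) = 1 := by
      have : (fun n : ℕ => μ (Set.Iic (p + 1 + n))) = fun _ => μ (Set.Iic p) := by
        funext n; exact hA _ (by have := (Nat.cast_nonneg n : (0:ℝ) ≤ n); linarith)
      rw [this] at hup
      exact tendsto_nhds_unique (tendsto_const_nhds : Tendsto (fun _ : ℕ => μ (Set.Iic p)) atTop _) hup
    intro y hy
    rw [hA y hy, hval]
  exact dirac_of_flat μ hB hC

lemma inv_affine (μ : Measure ℝ) [IsProbabilityMeasure μ] {l c : ℝ}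
    (hl0 : 0 < l) (hne : l ≠ 1) (h : ∀ y, μ (Set.Iic y) = μ (Set.Iic (l * y + c))) :
    μ {c / (1 - l)} = 1 := by
  rcases lt_or_gt_of_ne hne with hlt | hgt
  · exact inv_scale_lt μ hl0 hlt h
  · have h' : ∀ z, μ (Set.Iic z) = μ (Set.Iic (l⁻¹ * z + (-c / l))) := by
      intro z
      have := h ((z - c) / l)
      have harg : l * ((z - c) / l) + c = z := by field_simp; ring
      rw [harg] at this
      rw [← this]
      congr 2
      field_simp
      ring
    have := inv_scale_lt μ (inv_pos.2 hl0) (inv_lt_one_of_one_lt₀ hgt) h'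
    have hl1 : (1:ℝ) - l ≠ 0 := by intro hh; exact hne (by linarith)
    have hlne0 : l ≠ 0 := ne_of_gt hl0
    have harg : -c / l / (1 - l⁻¹) = c / (1 - l) := by
      rw [div_div]
      rw [div_eq_div_iff (by field_simp; intro hh; exact hne (by linarith)) hl1]
      field_simp
      ring
    rwa [harg] at this

noncomputable def quant (F : ℝ → ℝ) (u : ℝ) : ℝ := sInf {x | u < F x}

lemma quant_nonempty {F : ℝ → ℝ} (htop : Tendsto F atTop (𝓝 1)) {u : ℝ} (hu : u < 1) :
    {x | u < F x}.Nonempty := by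
  obtain ⟨x, hx⟩ := (htop.eventually (eventually_gt_nhds hu)).exists
  exact ⟨x, hx⟩

lemma quant_bddBelow {F : ℝ → ℝ} (hF : Monotone F) (hbot : Tendsto F atBot (𝓝 0)) {u : ℝ}
    (hu : 0 < u) : BddBelow {x | u < F x} := by
  obtain ⟨w, hw⟩ := eventually_atBot.1 (hbot.eventually (eventually_lt_nhds hu))
  refine ⟨w, fun x hx => ?_⟩
  by_contra hc
  push_neg at hc
  have : F x < u := hw x hc.le
  simp only [Set.mem_setOf_eq] at hx
  linarith

lemma quant_lt {F : ℝ → ℝ} (hF : Monotone F) (htop : Tendsto F atTop (𝓝 1)) {u ε : ℝ}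
    (h1 : u < 1) (hε : 0 < ε) : u < F (quant F u + ε) := by
  obtain ⟨x, hxS, hx⟩ := exists_lt_of_csInf_lt (quant_nonempty htop h1)
    (lt_add_of_pos_right (quant F u) hε)
  exact lt_of_lt_of_le hxS (hF hx.le)

lemma quant_le_of_lt {F : ℝ → ℝ} (hF : Monotone F) (hbot : Tendsto F atBot (𝓝 0)) {u y : ℝ}
    (h0 : 0 < u) (hy : y < quant F u) : F y ≤ u := by
  have := notMem_of_lt_csInf hy (quant_bddBelow hF hbot h0)
  simpa [Set.mem_setOf_eq, not_lt] using this

lemma le_quant {F : ℝ → ℝ} (hF : Monotone F) (htop : Tendsto F atTop (𝓝 1)) {u v : ℝ}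
    (h1 : u < 1) (hv : F v < u) : v ≤ quant F u := by
  refine le_csInf (quant_nonempty htop h1) fun x hx => ?_
  by_contra hc
  push_neg at hc
  simp only [Set.mem_setOf_eq] at hx
  have : F x ≤ F v := hF hc.le
  linarith

lemma quant_mono {F : ℝ → ℝ} (hF : Monotone F) (htop : Tendsto F atTop (𝓝 1))
    (hbot : Tendsto F atBot (𝓝 0)) {u u' : ℝ} (h0 : 0 < u) (h1 : u' < 1) (h : u ≤ u') :
    quant F u ≤ quant F u' :=
  csInf_le_csInf (quant_bddBelow hF hbot h0) (quant_nonempty htop h1)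
    (fun x hx => lt_of_le_of_lt h hx)

lemma quant_mem_le {F : ℝ → ℝ} (hF : Monotone F) (hbot : Tendsto F atBot (𝓝 0)) {u v : ℝ}
    (h0 : 0 < u) (hv : u < F v) : quant F u ≤ v :=
  csInf_le (quant_bddBelow hF hbot h0) hv

structure IsCDF (F : ℝ → ℝ) : Prop where
  mono : Monotone F
  top : Tendsto F atTop (𝓝 1)
  bot : Tendsto F atBot (𝓝 0)

section claims

variable {F G : ℝ → ℝ} {α β : ℕ → ℝ}

/-- sandwich hypothesis -/
def Sandw (F G : ℝ → ℝ) (α β : ℕ → ℝ) : Prop :=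
  ∀ x ε δ : ℝ, 0 < ε → 0 < δ → ∀ᶠ n in atTop,
    F ((x - β n) / α n) ≤ G (x + ε) + δ ∧ G (x - ε) - δ ≤ F ((x - β n) / α n)

lemma claim_up (hFc : IsCDF F) (hGc : IsCDF G) (hs : Sandw F G α β) (hα : ∀ n, 0 < α n)
    {u u' ε : ℝ} (hu0 : 0 < u) (huu' : u < u') (hu'1 : u' < 1) (hε : 0 < ε) :
    ∀ᶠ n in atTop, α n * quant F u + β n ≤ quant G u' + 2 * ε := by
  set x := quant G u' with hx
  have hGx : u' < G (x + ε) := quant_lt hGc.mono hGc.top hu'1 hε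
  have hδ : 0 < u' - u := by linarith
  filter_upwards [hs (x + 2 * ε) ε (u' - u) hε hδ] with n hn
  have h2 := hn.2
  have harg : x + 2 * ε - ε = x + ε := by ring
  rw [harg] at h2
  have hFv : u < F ((x + 2 * ε - β n) / α n) := by linarith
  have hq : quant F u ≤ (x + 2 * ε - β n) / α n := quant_mem_le hFc.mono hFc.bot hu0 hFv
  have := (le_div_iff₀ (hα n)).1 hq
  linarith [this]

lemma claim_down (hFc : IsCDF F) (hGc : IsCDF G) (hs : Sandw F G α β) (hα : ∀ n, 0 < α n)
    {u'' u ε : ℝ} (hu0 : 0 < u'') (huu : u'' < u) (hu1 : u < 1) (hε : 0 < ε) :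
    ∀ᶠ n in atTop, quant G u'' - 2 * ε ≤ α n * quant F u + β n := by
  set x := quant G u'' with hx
  have hGx : G (x - ε) ≤ u'' := quant_le_of_lt hGc.mono hGc.bot hu0 (by linarith)
  have hδ : 0 < (u - u'') / 2 := by linarith
  filter_upwards [hs (x - 2 * ε) ε ((u - u'') / 2) hε hδ] with n hn
  have h1 := hn.1
  have harg : x - 2 * ε + ε = x - ε := by ring
  rw [harg] at h1
  have hFv : F ((x - 2 * ε - β n) / α n) < u := by linarith
  have hq : (x - 2 * ε - β n) / α n ≤ quant F u := le_quant hFc.mono hFc.top hu1 hFv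
  have := (div_le_iff₀ (hα n)).1 hq
  linarith [this]

lemma CT2 (hFc : IsCDF F) (hGc : IsCDF G) (hs : Sandw F G α β) (hα : ∀ n, 0 < α n)
    {u₁ u₂ : ℝ} (h0 : 0 < u₁) (h12 : u₁ < u₂) (h21 : u₂ < 1)
    (hq : quant F u₁ < quant F u₂) (hαtop : Tendsto α atTop atTop) : False := by
  have h1 := claim_down hFc hGc hs hα (by linarith : 0 < u₁ / 2) (by linarith : u₁ / 2 < u₁)
    (by linarith) one_pos
  have h2 := claim_up hFc hGc hs hα (by linarith : 0 < u₂) (by linarith : u₂ < (u₂ + 1) / 2)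
    (by linarith) one_pos
  set q₁ := quant F u₁
  set q₂ := quant F u₂
  set C := (quant G ((u₂ + 1) / 2) + 2 - (quant G (u₁ / 2) - 2)) / (q₂ - q₁) with hC
  have h3 := hαtop.eventually (eventually_gt_atTop C)
  obtain ⟨n, hn1, hn2, hn3⟩ := (h1.and (h2.and h3)).exists
  have hqpos : 0 < q₂ - q₁ := by linarith
  have hCn : C * (q₂ - q₁) = quant G ((u₂ + 1) / 2) + 2 - (quant G (u₁ / 2) - 2) :=
    div_mul_cancel₀ _ (ne_of_gt hqpos)
  nlinarith [mul_lt_mul_of_pos_right hn3 hqpos]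

lemma CT1 (hFc : IsCDF F) (hs : Sandw F F α β) (hα : ∀ n, 0 < α n)
    {u₁ u₂ : ℝ} (h10 : 0 < u₁) (h12 : u₁ < u₂) (h21 : u₂ < 1)
    (hq : quant F u₁ < quant F u₂)
    (hL : ∀ u, u = u₁ ∨ u = u₂ → ∀ ε, 0 < ε → ∃ w, 0 < w ∧ w < u ∧ quant F u - ε < quant F w)
    (hR : ∀ u, u = u₁ ∨ u = u₂ → ∀ ε, 0 < ε → ∃ w, u < w ∧ w < 1 ∧ quant F w < quant F u + ε) :
    Tendsto α atTop (𝓝 1) ∧ Tendsto β atTop (𝓝 0) := by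
  have key : ∀ u, u = u₁ ∨ u = u₂ →
      Tendsto (fun n => α n * quant F u + β n) atTop (𝓝 (quant F u)) := by
    intro u hu
    have hu0 : 0 < u := by rcases hu with rfl | rfl <;> linarith
    have hu1 : u < 1 := by rcases hu with rfl | rfl <;> linarith
    rw [tendsto_order]
    constructor
    · intro q' hq'
      have hε : 0 < (quant F u - q') / 3 := by linarith
      obtain ⟨w, hw0, hwu, hwq⟩ := hL u hu _ hε
      filter_upwards [claim_down hFc hFc hs hα hw0 hwu hu1 hε] with n hn
      linarith
    · intro q' hq'
      have hε : 0 < (q' - quant F u) / 3 := by linarith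
      obtain ⟨w, hwu, hw1, hwq⟩ := hR u hu _ hε
      filter_upwards [claim_up hFc hFc hs hα hu0 hwu hw1 hε] with n hn
      linarith
  have hc := key u₁ (Or.inl rfl)
  have hd := key u₂ (Or.inr rfl)
  set q₁ := quant F u₁
  set q₂ := quant F u₂
  have hne : q₂ - q₁ ≠ 0 := by intro h; linarith [sub_eq_zero.1 h]
  have hαtd : Tendsto α atTop (𝓝 1) := by
    have h := (hd.sub hc).mul_const (q₂ - q₁)⁻¹
    have heq : (fun n => (α n * q₂ + β n - (α n * q₁ + β n)) * (q₂ - q₁)⁻¹) = α := by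
      funext n
      field_simp
      ring
    rw [heq] at h
    rw [show (q₂ - q₁) * (q₂ - q₁)⁻¹ = 1 from mul_inv_cancel₀ hne] at h
    exact h
  refine ⟨hαtd, ?_⟩
  have h := hc.sub (hαtd.mul_const q₁)
  have heq : (fun n => α n * q₁ + β n - α n * q₁) = β := by funext n; ring
  rw [heq] at h
  rw [show q₁ - 1 * q₁ = 0 by ring] at h
  exact h

lemma Ioo_diff_countable_nonempty {x y : ℝ} (hxy : x < y) {B : Set ℝ} (hB : B.Countable) :
    (Set.Ioo x y \ B).Nonempty := by
  by_contra hc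
  rw [Set.not_nonempty_iff_eq_empty, Set.diff_eq_empty] at hc
  have h0 := (hB.mono hc).measure_zero (volume : Measure ℝ)
  rw [Real.volume_Ioo] at h0
  rw [ENNReal.ofReal_eq_zero] at h0
  linarith

lemma exists_good_pair {F : ℝ → ℝ} (hFc : IsCDF F) {v₁ v₂ : ℝ}
    (hv10 : 0 < v₁) (hv12 : v₁ < v₂) (hv21 : v₂ < 1) (hv : quant F v₁ < quant F v₂) :
    ∃ u₁ u₂ : ℝ, 0 < u₁ ∧ u₁ < u₂ ∧ u₂ < 1 ∧ quant F u₁ < quant F u₂ ∧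
      (∀ u, u = u₁ ∨ u = u₂ → ∀ ε, 0 < ε → ∃ w, 0 < w ∧ w < u ∧ quant F u - ε < quant F w) ∧
      (∀ u, u = u₁ ∨ u = u₂ → ∀ ε, 0 < ε → ∃ w, u < w ∧ w < 1 ∧ quant F w < quant F u + ε) := by
  set a := v₁ / 2 with ha
  set b := (v₂ + 1) / 2 with hb
  have ha0 : 0 < a := by simp only [ha]; linarith
  have hav1 : a < v₁ := by simp only [ha]; linarith
  have hv2b : v₂ < b := by simp only [hb]; linarith
  have hb1 : b < 1 := by simp only [hb]; linarith
  have hab : a < b := by linarith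
  set cl : ℝ → ℝ := fun u => max a (min u b) with hcl
  have hcl_mono : Monotone cl := fun s t hst =>
    max_le_max le_rfl (min_le_min hst le_rfl)
  have hcl_mem : ∀ u, a ≤ cl u ∧ cl u ≤ b := fun u =>
    ⟨le_max_left _ _, max_le hab.le (min_le_right _ _)⟩
  have hcl_id : ∀ u, a ≤ u → u ≤ b → cl u = u := by
    intro u h1 h2
    simp only [hcl]
    rw [min_eq_left h2, max_eq_right h1]
  set Q : ℝ → ℝ := fun u => quant F (cl u) with hQ
  have hQmono : Monotone Q := by
    intro s t hst
    exact quant_mono hFc.mono hFc.top hFc.bot (lt_of_lt_of_le ha0 (hcl_mem s).1)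
      (lt_of_le_of_lt (hcl_mem t).2 hb1) (hcl_mono hst)
  have hBad : Set.Countable {u | ¬ContinuousAt Q u} := hQmono.countable_not_continuousAt
  -- good property from continuity
  have good : ∀ u, a < u → u < b → ContinuousAt Q u →
      ((∀ ε, 0 < ε → ∃ w, 0 < w ∧ w < u ∧ quant F u - ε < quant F w) ∧
       (∀ ε, 0 < ε → ∃ w, u < w ∧ w < 1 ∧ quant F w < quant F u + ε)) := by
    intro u hau hub hcont
    have hQu : Q u = quant F u := by rw [hQ]; simp only; rw [hcl_id u hau.le hub.le]
    constructor
    · intro ε hε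
      have hev : ∀ᶠ w in 𝓝 u, Q u - ε < Q w :=
        hcont.eventually (eventually_gt_nhds (by linarith : Q u - ε < Q u))
      obtain ⟨r, hr0, hr⟩ := Metric.eventually_nhds_iff.1 hev
      set w := max (u - r / 2) ((a + u) / 2) with hw
      have hwu : w < u := by
        apply max_lt
        · linarith
        · linarith
      have haw : a < w := lt_of_lt_of_le (by linarith : a < (a + u) / 2) (le_max_right _ _)
      have hdist : dist w u < r := by
        rw [Real.dist_eq, abs_lt]
        constructor
        · have : u - r / 2 ≤ w := le_max_left _ _
          linarith
        · linarith
      have := hr hdist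
      rw [hQu, hQ] at this
      simp only at this
      rw [hcl_id w haw.le (by linarith : w ≤ b)] at this
      exact ⟨w, by linarith, hwu, this⟩
    · intro ε hε
      have hev : ∀ᶠ w in 𝓝 u, Q w < Q u + ε :=
        hcont.eventually (eventually_lt_nhds (by linarith : Q u < Q u + ε))
      obtain ⟨r, hr0, hr⟩ := Metric.eventually_nhds_iff.1 hev
      set w := min (u + r / 2) ((u + b) / 2) with hw
      have huw : u < w := by
        apply lt_min
        · linarith
        · linarith
      have hwb : w < b := lt_of_le_of_lt (min_le_right _ _) (by linarith : (u + b) / 2 < b)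
      have hdist : dist w u < r := by
        rw [Real.dist_eq, abs_lt]
        constructor
        · linarith
        · have : w ≤ u + r / 2 := min_le_left _ _
          linarith
      have := hr hdist
      rw [hQu, hQ] at this
      simp only at this
      rw [hcl_id w (by linarith : a ≤ w) hwb.le] at this
      exact ⟨w, huw, by linarith, this⟩
  -- pick three good points
  obtain ⟨g₁, hg₁m, hg₁B⟩ := Ioo_diff_countable_nonempty (show a < v₁ from hav1) hBad
  obtain ⟨g₂, hg₂m, hg₂B⟩ := Ioo_diff_countable_nonempty hv12 hBad
  obtain ⟨g₃, hg₃m, hg₃B⟩ := Ioo_diff_countable_nonempty (show v₂ < b from hv2b) hBad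
  simp only [Set.mem_setOf_eq, not_not] at hg₁B hg₂B hg₃B
  rw [Set.mem_Ioo] at hg₁m hg₂m hg₃m
  have hcont₁ : ContinuousAt Q g₁ := hg₁B
  have hcont₂ : ContinuousAt Q g₂ := hg₂B
  have hcont₃ : ContinuousAt Q g₃ := hg₃B
  have hg₁ab : a < g₁ ∧ g₁ < b := ⟨hg₁m.1, by linarith [hg₁m.2]⟩
  have hg₂ab : a < g₂ ∧ g₂ < b := ⟨by linarith [hg₂m.1], by linarith [hg₂m.2]⟩
  have hg₃ab : a < g₃ ∧ g₃ < b := ⟨by linarith [hg₃m.1], hg₃m.2⟩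
  have qmono : ∀ s t : ℝ, 0 < s → t < 1 → s ≤ t → quant F s ≤ quant F t :=
    fun s t h1 h2 h3 => quant_mono hFc.mono hFc.top hFc.bot h1 h2 h3
  have h1v : quant F g₁ ≤ quant F v₁ := qmono _ _ (by linarith [hg₁m.1]) (by linarith) hg₁m.2.le
  have hv2' : quant F v₁ ≤ quant F g₂ := qmono _ _ (by linarith) (by linarith [hg₂m.2]) hg₂m.1.le
  have h2v : quant F g₂ ≤ quant F v₂ := qmono _ _ (by linarith [hg₂m.1]) (by linarith) hg₂m.2.le
  have hv3 : quant F v₂ ≤ quant F g₃ := qmono _ _ (by linarith) (by linarith [hg₃m.2]) hg₃m.1.le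
  rcases lt_or_ge (quant F g₁) (quant F g₂) with hlt | hle
  · refine ⟨g₁, g₂, by linarith [hg₁m.1], by linarith [hg₁m.2, hg₂m.1], by linarith [hg₂m.2], hlt,
      ?_, ?_⟩
    · intro u hu ε hε
      rcases hu with rfl | rfl
      · exact (good _ hg₁ab.1 hg₁ab.2 hcont₁).1 ε hε
      · exact (good _ hg₂ab.1 hg₂ab.2 hcont₂).1 ε hε
    · intro u hu ε hε
      rcases hu with rfl | rfl
      · exact (good _ hg₁ab.1 hg₁ab.2 hcont₁).2 ε hε
      · exact (good _ hg₂ab.1 hg₂ab.2 hcont₂).2 ε hε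
  · have hlt : quant F g₂ < quant F g₃ := by linarith
    refine ⟨g₂, g₃, by linarith [hg₂m.1], by linarith [hg₂m.2, hg₃m.1], by linarith [hg₃m.2], hlt,
      ?_, ?_⟩
    · intro u hu ε hε
      rcases hu with rfl | rfl
      · exact (good _ hg₂ab.1 hg₂ab.2 hcont₂).1 ε hε
      · exact (good _ hg₃ab.1 hg₃ab.2 hcont₃).1 ε hε
    · intro u hu ε hε
      rcases hu with rfl | rfl
      · exact (good _ hg₂ab.1 hg₂ab.2 hcont₂).2 ε hε
      · exact (good _ hg₃ab.1 hg₃ab.2 hcont₃).2 ε hε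

noncomputable def rcdf (μ : Measure ℝ) : ℝ → ℝ := fun y => (μ (Set.Iic y)).toReal

lemma rcdf_isCDF (μ : Measure ℝ) [IsProbabilityMeasure μ] : IsCDF (rcdf μ) := by
  constructor
  · intro s t hst
    exact ENNReal.toReal_mono (measure_ne_top μ _) (measure_mono (Set.Iic_subset_Iic.2 hst))
  · have h := tendsto_measure_Iic_atTop (μ := μ)
    rw [measure_univ] at h
    have h2 := (ENNReal.tendsto_toReal ENNReal.one_ne_top).comp h
    exact (by simpa [Function.comp_def] using h2 : Tendsto (fun x => (μ (Set.Iic x)).toReal) _ _)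
  · have h := tendsto_measure_iInter_atBot (μ := μ) (s := fun x : ℝ => Set.Iic x)
      (fun x => measurableSet_Iic.nullMeasurableSet) (fun s t hst => Set.Iic_subset_Iic.2 hst)
      ⟨0, measure_ne_top μ _⟩
    have hempty : ⋂ x : ℝ, Set.Iic x = ∅ := by
      ext y
      simp only [Set.mem_iInter, Set.mem_Iic, Set.mem_empty_iff_false, iff_false, not_forall,
        not_le]
      exact ⟨y - 1, by linarith⟩
    rw [hempty, measure_empty] at h
    have h2 := (ENNReal.tendsto_toReal ENNReal.zero_ne_top).comp h
    exact (by simpa [Function.comp_def] using h2 : Tendsto (fun x => (μ (Set.Iic x)).toReal) _ _)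

lemma rcdf_eq_one {μ : Measure ℝ} [IsProbabilityMeasure μ] {y : ℝ} (h : rcdf μ y = 1) :
    μ (Set.Iic y) = 1 := by
  have hne := measure_ne_top μ (Set.Iic y)
  rw [rcdf] at h
  rcases ENNReal.toReal_eq_one_iff (μ (Set.Iic y)) |>.1 h with h1
  exact h1

lemma rcdf_eq_zero {μ : Measure ℝ} [IsProbabilityMeasure μ] {y : ℝ} (h : rcdf μ y = 0) :
    μ (Set.Iic y) = 0 := by
  have hne := measure_ne_top μ (Set.Iic y)
  rw [rcdf, ENNReal.toReal_eq_zero_iff] at h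
  tauto

lemma nondeg_quant_pair (μ : Measure ℝ) [IsProbabilityMeasure μ]
    (hnd : ∀ p : ℝ, μ {p} ≠ 1) :
    ∃ v₁ v₂ : ℝ, 0 < v₁ ∧ v₁ < v₂ ∧ v₂ < 1 ∧ quant (rcdf μ) v₁ < quant (rcdf μ) v₂ := by
  set F := rcdf μ with hFdef
  have hFc := rcdf_isCDF μ
  by_contra hc
  push_neg at hc
  have hconst : ∀ u : ℝ, 0 < u → u < 1 → quant F u = quant F (1/2) := by
    intro u h0 h1
    rcases lt_trichotomy u (1/2) with h | h | h
    · exact le_antisymm (quant_mono hFc.mono hFc.top hFc.bot h0 (by norm_num) h.le)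
        (hc u (1/2) h0 h (by norm_num))
    · rw [h]
    · exact le_antisymm (hc (1/2) u (by norm_num) h h1)
        (quant_mono hFc.mono hFc.top hFc.bot (by norm_num) h1 h.le)
  set p := quant F (1/2) with hp
  have h1 : ∀ y, p < y → μ (Set.Iic y) = 1 := by
    intro y hy
    apply rcdf_eq_one
    have hFy1 : F y ≤ 1 := by
      refine ge_of_tendsto hFc.top (eventually_atTop.2 ⟨y, fun x hx => hFc.mono hx⟩)
    by_contra hne
    have hFylt : F y < 1 := lt_of_le_of_ne hFy1 hne
    set u := max (F y) (1/2) with hu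
    have hu0 : 0 < u := lt_of_lt_of_le (by norm_num) (le_max_right _ _)
    have hu1 : u < 1 := max_lt hFylt (by norm_num)
    have hqu : quant F u = p := hconst u hu0 hu1
    have := quant_lt hFc.mono hFc.top hu1 (show (0:ℝ) < y - p by linarith)
    rw [hqu] at this
    have harg : p + (y - p) = y := by ring
    rw [harg] at this
    exact absurd this (not_lt.2 (le_max_left _ _))
  have h0 : ∀ y, y < p → μ (Set.Iic y) = 0 := by
    intro y hy
    apply rcdf_eq_zero
    have hFy0 : 0 ≤ F y := ENNReal.toReal_nonneg
    by_contra hne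
    have hFypos : 0 < F y := lt_of_le_of_ne hFy0 (Ne.symm hne)
    set u := min (F y) (1/2) / 2 with hu
    have hu0 : 0 < u := by
      have : 0 < min (F y) (1/2) := lt_min hFypos (by norm_num)
      simp only [hu]; linarith
    have hu1 : u < 1 := by
      have : min (F y) (1/2) ≤ 1/2 := min_le_right _ _
      simp only [hu]; linarith
    have huFy : u < F y := by
      have h1 : min (F y) (1/2) ≤ F y := min_le_left _ _
      have h2 : 0 < min (F y) (1/2) := lt_min hFypos (by norm_num)
      simp only [hu]; linarith
    have hqu : quant F u = p := hconst u hu0 hu1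
    have := quant_le_of_lt hFc.mono hFc.bot hu0 (show y < quant F u by rw [hqu]; exact hy)
    linarith
  exact hnd p (dirac_of_flat μ h0 h1)

lemma mult_to_rpow (h : ℝ → ℝ) (hpos : ∀ x, 0 < x → 0 < h x)
    (hmul : ∀ x y, 0 < x → 0 < y → h (x * y) = h x * h y)
    (hcont : ∀ x : ℕ → ℝ, (∀ k, 0 < x k) → Tendsto x atTop (𝓝 1) →
      Tendsto (fun k => h (x k)) atTop (𝓝 1)) :
    ∀ x, 0 < x → h x = x ^ (Real.log (h (Real.exp 1))) := by
  have h1 : h 1 = 1 := by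
    have := hmul 1 1 one_pos one_pos
    rw [mul_one] at this
    have hp := hpos 1 one_pos
    nlinarith
  set L : ℝ → ℝ := fun u => Real.log (h (Real.exp u)) with hL
  have hLadd : ∀ u v, L (u + v) = L u + L v := by
    intro u v
    simp only [hL]
    rw [Real.exp_add, hmul _ _ (Real.exp_pos u) (Real.exp_pos v),
      Real.log_mul (ne_of_gt (hpos _ (Real.exp_pos u))) (ne_of_gt (hpos _ (Real.exp_pos v)))]
  set Lhom : ℝ →+ ℝ := AddMonoidHom.mk' L hLadd with hLhom
  have hL0 : L 0 = 0 := by simp only [hL]; rw [Real.exp_zero, h1, Real.log_one]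
  have hLcont0 : ContinuousAt L 0 := by
    rw [ContinuousAt, hL0]
    rw [tendsto_iff_seq_tendsto]
    intro x hx
    have hxe : Tendsto (fun k => Real.exp (x k)) atTop (𝓝 1) := by
      have := (Real.continuous_exp.tendsto 0).comp hx
      simpa [Function.comp_def] using this
    have hh := hcont _ (fun k => Real.exp_pos (x k)) hxe
    have := (Real.continuousAt_log one_ne_zero).tendsto.comp hh
    simpa [hL, Function.comp_def] using this
  have hLcont : Continuous L := by
    rw [continuous_iff_continuousAt]
    intro u₀
    have heq : ∀ u, L u = L (u - u₀) + L u₀ := by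
      intro u
      rw [← hLadd]
      ring_nf
    rw [ContinuousAt]
    have : Tendsto (fun u => L (u - u₀) + L u₀) (𝓝 u₀) (𝓝 (L u₀)) := by
      have h1 : Tendsto (fun u : ℝ => u - u₀) (𝓝 u₀) (𝓝 0) := by
        have : Continuous (fun u : ℝ => u - u₀) := continuous_id.sub continuous_const
        have h := this.tendsto u₀
        simpa using h
      have h2 := hLcont0.tendsto.comp h1
      have := h2.add_const (L u₀)
      rw [hL0, zero_add] at this
      exact this
    exact Tendsto.congr (fun u => (heq u).symm) this
  have hLrat : ∀ (q : ℚ), L q = q * L 1 := by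
    intro q
    have := map_ratCast_smul Lhom ℝ ℝ q (1 : ℝ)
    simpa [hLhom, smul_eq_mul] using this
  have hLlin : ∀ u, L u = L 1 * u := by
    have hg : Continuous (fun u => L u - L 1 * u) := hLcont.sub (continuous_const.mul continuous_id)
    have hzero : (fun u => L u - L 1 * u) = fun _ => 0 := by
      have hdense : Dense (Set.range ((↑) : ℚ → ℝ)) := Rat.denseRange_cast
      refine Continuous.ext_on hdense hg (continuous_const : Continuous fun _ : ℝ => (0:ℝ)) ?_
      rintro x ⟨q, rfl⟩
      simp only
      rw [hLrat q]
      ring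
    intro u
    have := congrFun hzero u
    linarith
  intro x hx
  have hx1 : h x = Real.exp (L (Real.log x)) := by
    simp only [hL]
    rw [Real.exp_log hx, Real.exp_log (hpos x hx)]
  rw [hx1, hLlin, Real.rpow_def_of_pos hx]
  congr 1
  have hL1 : L 1 = Real.log (h (Real.exp 1)) := by simp only [hL]
  rw [hL1]
  ring

section main
variable {Ω : Type*} [MeasurableSpace Ω] (P : Measure Ω) [IsProbabilityMeasure P]

lemma affine_set_eq (Z : Ω → ℝ) {γ : ℝ} (hγ : 0 < γ) (δ x : ℝ) :
    {ω | γ * Z ω + δ ≤ x} = Z ⁻¹' (Set.Iic ((x - δ) / γ)) := by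
  ext ω
  simp only [Set.mem_setOf_eq, Set.mem_preimage, Set.mem_Iic]
  rw [le_div_iff₀ hγ]
  constructor <;> intro hh <;> nlinarith

lemma ae_const_of_map_singleton {Z : Ω → ℝ} (hZ : Measurable Z) {p : ℝ}
    (h : P.map Z {p} = 1) : ∀ᵐ ω ∂P, Z ω = p := by
  rw [Measure.map_apply hZ (measurableSet_singleton p)] at h
  have hc : P (Z ⁻¹' {p})ᶜ = 0 := by
    rw [measure_compl (hZ (measurableSet_singleton p)) (measure_ne_top P _), h, measure_univ]
    simp
  have hset : {ω | ¬ Z ω = p} = (Z ⁻¹' {p})ᶜ := by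
    ext ω
    simp
  rw [ae_iff, hset]
  exact hc

lemma affine_unique {Z : Ω → ℝ} (hZ : Measurable Z)
    (hnd : ¬ ∃ c : ℝ, ∀ᵐ ω ∂P, Z ω = c)
    {α β α' β' : ℝ} (hα : 0 < α) (hα' : 0 < α')
    (h : ∀ x : ℝ, P {ω | α * Z ω + β ≤ x} = P {ω | α' * Z ω + β' ≤ x}) :
    α = α' ∧ β = β' := by
  set μ := P.map Z with hμ
  have : IsProbabilityMeasure μ := Measure.isProbabilityMeasure_map hZ.aemeasurable
  have hmap : ∀ y : ℝ, μ (Set.Iic y) = P (Z ⁻¹' Set.Iic y) := fun y =>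
    Measure.map_apply hZ measurableSet_Iic
  set l := α / α' with hl
  set c := (β - β') / α' with hc
  have hl0 : 0 < l := div_pos hα hα'
  have hinv : ∀ y, μ (Set.Iic y) = μ (Set.Iic (l * y + c)) := by
    intro y
    have hx := h (α * y + β)
    rw [affine_set_eq Z hα, affine_set_eq Z hα'] at hx
    have e1 : (α * y + β - β) / α = y := by field_simp; ring
    have e2 : (α * y + β - β') / α' = l * y + c := by
      simp only [hl, hc]
      ring
    rw [e1, e2] at hx
    rw [hmap, hmap, hx]
  by_cases hl1 : l = 1
  · have hαα : α = α' := by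
      rw [hl, div_eq_one_iff_eq (ne_of_gt hα')] at hl1
      exact hl1
    refine ⟨hαα, ?_⟩
    by_contra hne
    have hc0 : c ≠ 0 := by
      simp only [hc, div_ne_zero_iff]
      exact ⟨sub_ne_zero.2 hne, ne_of_gt hα'⟩
    apply inv_translate μ _ hc0
    intro y
    have := hinv y
    rw [hl1, one_mul] at this
    exact this
  · exfalso
    have := inv_affine μ hl0 hl1 hinv
    exact hnd ⟨_, ae_const_of_map_singleton P hZ this⟩

lemma sandwich_of_tendstoInMeasure (Wn : ℕ → Ω → ℝ) (W : Ω → ℝ)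
    (htim : TendstoInMeasure P Wn atTop W) (x ε δ : ℝ) (hε : 0 < ε) (hδ : 0 < δ) :
    ∀ᶠ n in atTop,
      (P {ω | Wn n ω ≤ x}).toReal ≤ (P {ω | W ω ≤ x + ε}).toReal + δ ∧
      (P {ω | W ω ≤ x - ε}).toReal - δ ≤ (P {ω | Wn n ω ≤ x}).toReal := by
  have hδ' : (0 : ℝ≥0∞) < ENNReal.ofReal δ := ENNReal.ofReal_pos.2 hδ
  filter_upwards [(tendstoInMeasure_iff_dist.1 htim ε hε).eventually (gt_mem_nhds hδ')] with n hn
  have hd := le_of_lt hn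
  constructor
  · have hincl : {ω | Wn n ω ≤ x} ⊆ {ω | W ω ≤ x + ε} ∪ {ω | ε ≤ dist (Wn n ω) (W ω)} := by
      intro ω hω
      simp only [Set.mem_setOf_eq] at hω
      by_cases hdist : ε ≤ dist (Wn n ω) (W ω)
      · exact Or.inr hdist
      · push_neg at hdist
        rw [Real.dist_eq, abs_lt] at hdist
        exact Or.inl (by simp only [Set.mem_setOf_eq]; linarith [hdist.1])
    have h1 : P {ω | Wn n ω ≤ x} ≤ P {ω | W ω ≤ x + ε} + ENNReal.ofReal δ :=
      le_trans (measure_mono hincl) (le_trans (measure_union_le _ _) (add_le_add_right hd _))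
    have h2 := ENNReal.toReal_mono (by
      exact ENNReal.add_ne_top.2 ⟨measure_ne_top P _, ENNReal.ofReal_ne_top⟩) h1
    rw [ENNReal.toReal_add (measure_ne_top P _) ENNReal.ofReal_ne_top,
      ENNReal.toReal_ofReal hδ.le] at h2
    exact h2
  · have hincl : {ω | W ω ≤ x - ε} ⊆ {ω | Wn n ω ≤ x} ∪ {ω | ε ≤ dist (Wn n ω) (W ω)} := by
      intro ω hω
      simp only [Set.mem_setOf_eq] at hω
      by_cases hdist : ε ≤ dist (Wn n ω) (W ω)
      · exact Or.inr hdist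
      · push_neg at hdist
        rw [Real.dist_eq, abs_lt] at hdist
        exact Or.inl (by simp only [Set.mem_setOf_eq]; linarith [hdist.2])
    have h1 : P {ω | W ω ≤ x - ε} ≤ P {ω | Wn n ω ≤ x} + ENNReal.ofReal δ :=
      le_trans (measure_mono hincl) (le_trans (measure_union_le _ _) (add_le_add_right hd _))
    have h2 := ENNReal.toReal_mono (by
      exact ENNReal.add_ne_top.2 ⟨measure_ne_top P _, ENNReal.ofReal_ne_top⟩) h1
    rw [ENNReal.toReal_add (measure_ne_top P _) ENNReal.ofReal_ne_top,
      ENNReal.toReal_ofReal hδ.le] at h2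
    linarith

lemma rcdf_map {Z : Ω → ℝ} (hZ : Measurable Z) (y : ℝ) :
    rcdf (P.map Z) y = (P {ω | Z ω ≤ y}).toReal := by
  rw [rcdf, Measure.map_apply hZ measurableSet_Iic]
  rfl

end main

lemma tim_comp {Ω : Type*} [MeasurableSpace Ω] (P : Measure Ω) {m : ℕ}
    (Wn : ℕ → Ω → (Fin m → ℝ)) (W : Ω → Fin m → ℝ)
    (h : TendstoInMeasure P Wn atTop W) (j : Fin m) :
    TendstoInMeasure P (fun n ω => Wn n ω j) atTop (fun ω => W ω j) := by
  intro ε hε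
  have hle : ∀ n, P {ω | ε ≤ edist (Wn n ω j) (W ω j)} ≤ P {ω | ε ≤ edist (Wn n ω) (W ω)} :=
    fun n => measure_mono (fun ω hω => le_trans hω (edist_le_pi_edist _ _ j))
  exact tendsto_of_tendsto_of_tendsto_of_le_of_le tendsto_const_nhds (h ε hε)
    (fun n => zero_le) hle

/-- the coordinate embedding -/
def iota {d : ℕ} (i : Fin d) (x : ℝ) : Fin d → ℝ := fun i' => if i' = i then x else 1

lemma iota_pos {d : ℕ} (i : Fin d) {x : ℝ} (hx : 0 < x) : ∀ i', 0 < iota i x i' := by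
  intro i'
  rw [iota]
  split <;> [exact hx; exact one_pos]

lemma iota_mul {d : ℕ} (i : Fin d) (x y : ℝ) :
    iota i (x * y) = iota i x * iota i y := by
  funext i'
  simp only [iota, Pi.mul_apply]
  split <;> simp


/-- Let `X = (X₁,...,X_m)` be a non-degenerate wide-sense
multi-self-similar `ℝ^m`-valued random field on `T = [0,∞)^d` with scaling
functions `f = (f₁,...,f_m)` and shift functions `g = (g₁,...,g_m)`. Then there
exist nonnegative reals `H_i^{(j)}` with `f_j(a) = ∏_i a_i^{H_i^{(j)}}`, and for
every `j` whose exponent vector `H^{(j)}` is not identically zero there is a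
constant `D_j ∈ ℝ` with `g_j(a) = D_j(1 − f_j(a))` for all `a ∈ (0,∞)^d` and
`X_j(0) = D_j` almost surely. -/
theorem stmt_10 {d m : ℕ} {Ω : Type*} [MeasurableSpace Ω]
    (P : Measure Ω) [IsProbabilityMeasure P]
    (X : (Fin d → ℝ) → Ω → (Fin m → ℝ))
    (hXmeas : ∀ t, Measurable (X t))
    -- stochastic continuity on `[0,∞)^d`
    (hXcont : ∀ t : Fin d → ℝ, (∀ i, 0 ≤ t i) →
      ∀ u : ℕ → Fin d → ℝ, (∀ n i, 0 ≤ u n i) → Tendsto u atTop (𝓝 t) →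
        TendstoInMeasure P (fun n => X (u n)) atTop (X t))
    (f : (Fin d → ℝ) → Fin m → ℝ) (g : (Fin d → ℝ) → Fin m → ℝ)
    (hfpos : ∀ a : Fin d → ℝ, (∀ i, 0 < a i) → ∀ j, 0 < f a j)
    -- wide-sense multi-self-similarity
    (hss : ∀ a : Fin d → ℝ, (∀ i, 0 < a i) →
      ∀ (k : ℕ) (t : Fin k → Fin d → ℝ), (∀ i i', 0 ≤ t i i') →
        Measure.map (fun ω => fun i => X (a * t i) ω) P
          = Measure.map (fun ω => fun i => fun j => f a j * X (t i) ω j + g a j) P)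
    -- non-degeneracy: `X_j(1,...,1)` is not a.s. constant
    (hnd : ∀ j, ¬ ∃ c : ℝ, ∀ᵐ ω ∂P, X (fun _ => 1) ω j = c) :
    ∃ H : Fin m → Fin d → ℝ, (∀ j i, 0 ≤ H j i) ∧
      (∀ a : Fin d → ℝ, (∀ i, 0 < a i) → ∀ j, f a j = ∏ i, a i ^ H j i) ∧
      (∀ j, H j ≠ 0 → ∃ D : ℝ,
        (∀ a : Fin d → ℝ, (∀ i, 0 < a i) → g a j = D * (1 - f a j)) ∧
        (∀ᵐ ω ∂P, X 0 ω j = D)) := by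
  classical
  have hZmeas : ∀ (t : Fin d → ℝ) (j : Fin m), Measurable fun ω => X t ω j :=
    fun t j => (measurable_pi_apply j).comp (hXmeas t)
  -- Step 1 : one-dimensional marginal law
  have step1 : ∀ (a : Fin d → ℝ), (∀ i, 0 < a i) → ∀ (t : Fin d → ℝ), (∀ i, 0 ≤ t i) →
      ∀ (j : Fin m) (x : ℝ),
      P {ω | X (a * t) ω j ≤ x} = P {ω | f a j * X t ω j + g a j ≤ x} := by
    intro a ha t ht j x
    have hmap := hss a ha 1 (fun _ => t) (fun _ i' => ht i')
    have hA : MeasurableSet {v : Fin 1 → Fin m → ℝ | v 0 j ≤ x} := by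
      have hm : Measurable fun v : Fin 1 → Fin m → ℝ => v 0 j :=
        (measurable_pi_apply j).comp (measurable_pi_apply 0)
      exact measurableSet_le hm measurable_const
    have hφ : Measurable fun ω => fun i : Fin 1 => X (a * (fun _ : Fin 1 => t) i) ω :=
      measurable_pi_lambda _ fun _ => hXmeas _
    have hψ : Measurable fun ω => fun i : Fin 1 => fun j' : Fin m =>
        f a j' * X ((fun _ : Fin 1 => t) i) ω j' + g a j' :=
      measurable_pi_lambda _ fun _ => measurable_pi_lambda _ fun j' =>
        ((hZmeas t j').const_mul _).add_const _
    have h1 := congrArg (fun μ : Measure (Fin 1 → Fin m → ℝ) => μ {v | v 0 j ≤ x}) hmap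
    rw [Measure.map_apply hφ hA, Measure.map_apply hψ hA] at h1
    exact h1
  -- law of X a in terms of X 1
  have law1 : ∀ (a : Fin d → ℝ), (∀ i, 0 < a i) → ∀ (j : Fin m) (x : ℝ),
      P {ω | X a ω j ≤ x} = P {ω | f a j * X (fun _ => 1) ω j + g a j ≤ x} := by
    intro a ha j x
    have := step1 a ha (fun _ => 1) (fun _ => zero_le_one) j x
    rwa [show a * (fun _ => (1:ℝ)) = a from funext fun i => mul_one _] at this
  -- multiplicativity of f and cocycle of g
  have fg_mult : ∀ (a b : Fin d → ℝ), (∀ i, 0 < a i) → (∀ i, 0 < b i) → ∀ j,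
      f (a * b) j = f a j * f b j ∧ g (a * b) j = f a j * g b j + g a j := by
    intro a b ha hb j
    have hab : ∀ i, 0 < (a * b) i := fun i => mul_pos (ha i) (hb i)
    have hfa := hfpos a ha j
    have hfb := hfpos b hb j
    have hchain : ∀ x : ℝ, P {ω | f (a*b) j * X (fun _ => 1) ω j + g (a*b) j ≤ x}
        = P {ω | (f a j * f b j) * X (fun _ => 1) ω j + (f a j * g b j + g a j) ≤ x} := by
      intro x
      have h1 := (law1 (a*b) hab j x).symm
      have h2 := step1 a ha b (fun i => (hb i).le) j x
      have e1 : {ω | f a j * X b ω j + g a j ≤ x}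
          = {ω | X b ω j ≤ (x - g a j) / f a j} := by
        have := affine_set_eq (fun ω => X b ω j) hfa (g a j) x
        exact this
      have h3 := law1 b hb j ((x - g a j) / f a j)
      have e2 : {ω | f b j * X (fun _ => 1) ω j + g b j ≤ (x - g a j) / f a j}
          = {ω | (f a j * f b j) * X (fun _ => 1) ω j + (f a j * g b j + g a j) ≤ x} := by
        ext ω
        simp only [Set.mem_setOf_eq]
        rw [le_div_iff₀ hfa]
        constructor <;> intro hh <;> nlinarith
      rw [h1, h2, e1, h3, e2]
    exact affine_unique P (hZmeas _ j) (hnd j) (hfpos _ hab j)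
      (mul_pos hfa hfb) hchain
  -- f at the all-ones vector
  have hf1 : ∀ j, f (fun _ => (1:ℝ)) j = 1 := by
    intro j
    have := (fg_mult (fun _ => 1) (fun _ => 1) (fun _ => one_pos) (fun _ => one_pos) j).1
    rw [show (fun _ => (1:ℝ)) * (fun _ : Fin d => (1:ℝ)) = fun _ => (1:ℝ)
      from funext fun i => mul_one _] at this
    have hp := hfpos (fun _ => 1) (fun _ => one_pos) j
    nlinarith
  -- cdf of the law of X 1 coordinate j
  set F : Fin m → ℝ → ℝ :=
    fun j => rcdf (P.map (fun ω => X (fun _ => 1) ω j)) with hFdef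
  have hmapP : ∀ j, IsProbabilityMeasure (P.map (fun ω => X (fun _ => 1) ω j)) :=
    fun j => Measure.isProbabilityMeasure_map (hZmeas _ j).aemeasurable
  have hFc : ∀ j, IsCDF (F j) := fun j => by
    haveI := hmapP j
    exact rcdf_isCDF _
  have hndmap : ∀ j (p : ℝ), (P.map (fun ω => X (fun _ => 1) ω j)) {p} ≠ 1 := by
    intro j p hp
    exact hnd j ⟨p, ae_const_of_map_singleton P (hZmeas _ j) hp⟩
  have hpair : ∀ j, ∃ v₁ v₂ : ℝ, 0 < v₁ ∧ v₁ < v₂ ∧ v₂ < 1 ∧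
      quant (F j) v₁ < quant (F j) v₂ := by
    intro j
    haveI := hmapP j
    exact nondeg_quant_pair _ (hndmap j)
  -- sandwich construction
  have hsandw : ∀ (j : Fin m) (t₀ : Fin d → ℝ), (∀ i, 0 ≤ t₀ i) →
      ∀ (aseq : ℕ → Fin d → ℝ), (∀ k i, 0 < aseq k i) →
      Tendsto aseq atTop (𝓝 t₀) →
      Sandw (F j) (rcdf (P.map (fun ω => X t₀ ω j)))
        (fun k => f (aseq k) j) (fun k => g (aseq k) j) := by
    intro j t₀ ht₀ aseq hapos halim x ε δ hε hδ
    have htimv := hXcont t₀ ht₀ aseq (fun k i => (hapos k i).le) halim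
    have htim := tim_comp P _ _ htimv j
    filter_upwards [sandwich_of_tendstoInMeasure P _ _ htim x ε δ hε hδ] with n hn
    have hFn : F j ((x - g (aseq n) j) / f (aseq n) j)
        = (P {ω | X (aseq n) ω j ≤ x}).toReal := by
      rw [hFdef]
      simp only
      rw [rcdf_map P (hZmeas _ j)]
      congr 1
      have e := affine_set_eq (fun ω => X (fun _ => 1) ω j) (hfpos _ (hapos n) j)
        (g (aseq n) j) x
      rw [law1 (aseq n) (hapos n) j x, e]
      rfl
    have hG : ∀ y : ℝ, rcdf (P.map (fun ω => X t₀ ω j)) y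
        = (P {ω | X t₀ ω j ≤ y}).toReal := fun y => rcdf_map P (hZmeas _ j) y
    rw [hFn, hG, hG]
    exact hn
  -- continuity of f along sequences tending to 1
  have key1 : ∀ (i : Fin d) (j : Fin m) (x : ℕ → ℝ), (∀ k, 0 < x k) →
      Tendsto x atTop (𝓝 1) →
      Tendsto (fun k => f (iota i (x k)) j) atTop (𝓝 1) := by
    intro i j x hx hxlim
    have hapos : ∀ k i', 0 < iota i (x k) i' := fun k => iota_pos i (hx k)
    have halim : Tendsto (fun k => iota i (x k)) atTop (𝓝 (fun _ => 1)) := by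
      rw [tendsto_pi_nhds]
      intro i'
      by_cases hii' : i' = i
      · subst hii'
        simp only [iota, if_pos rfl]
        exact hxlim
      · simp only [iota, if_neg hii']
        exact tendsto_const_nhds
    have hone : (fun _ : Fin d => (1:ℝ)) = iota i 1 ∨ True := Or.inr trivial
    have hs : Sandw (F j) (F j) (fun k => f (iota i (x k)) j) (fun k => g (iota i (x k)) j) := by
      have := hsandw j (fun _ => 1) (fun _ => zero_le_one) (fun k => iota i (x k)) hapos halim
      exact this
    obtain ⟨v₁, v₂, hv0, hv12, hv21, hvq⟩ := hpair j
    obtain ⟨u₁, u₂, h10, h12, h21, hq, hL, hR⟩ := exists_good_pair (hFc j) hv0 hv12 hv21 hvq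
    exact (CT1 (hFc j) hs (fun k => hfpos _ (hapos k) j) h10 h12 h21 hq hL hR).1
  -- power form of f on coordinate directions
  set E : Fin m → Fin d → ℝ :=
    fun j i => Real.log (f (iota i (Real.exp 1)) j) with hEdef
  have hpow : ∀ (j : Fin m) (i : Fin d) (x : ℝ), 0 < x → f (iota i x) j = x ^ E j i := by
    intro j i
    have := mult_to_rpow (fun x => f (iota i x) j)
      (fun x hx => hfpos _ (iota_pos i hx) j)
      (fun x y hx hy => by
        show f (iota i (x * y)) j = f (iota i x) j * f (iota i y) j
        rw [iota_mul]
        exact (fg_mult _ _ (iota_pos i hx) (iota_pos i hy) j).1)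
      (fun x hx hxl => key1 i j x hx hxl)
    exact this
  -- product formula
  have hprod_fin : ∀ (a : Fin d → ℝ), (∀ i, 0 < a i) → ∀ j (s : Finset (Fin d)),
      f (fun i => if i ∈ s then a i else 1) j = ∏ i ∈ s, f (iota i (a i)) j := by
    intro a ha j s
    induction s using Finset.induction_on with
    | empty => simpa using hf1 j
    | insert i s hnotmem ih =>
      have hvec : (fun i' => if i' ∈ insert i s then a i' else 1)
          = iota i (a i) * (fun i' => if i' ∈ s then a i' else 1) := by
        funext i'
        simp only [Pi.mul_apply, iota]
        by_cases h1 : i' = i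
        · subst h1
          rw [if_pos (Finset.mem_insert_self _ _), if_pos rfl, if_neg hnotmem, mul_one]
        · rw [if_neg h1, one_mul]
          by_cases h2 : i' ∈ s
          · rw [if_pos h2, if_pos (Finset.mem_insert_of_mem h2)]
          · rw [if_neg h2, if_neg (by simp [h1, h2])]
      rw [hvec, (fg_mult _ _ (iota_pos i (ha i)) (fun i' => by
          by_cases h2 : i' ∈ s
          · rw [if_pos h2]; exact ha i'
          · rw [if_neg h2]; exact one_pos) j).1,
        ih, Finset.prod_insert hnotmem]
  have hprod : ∀ (a : Fin d → ℝ), (∀ i, 0 < a i) → ∀ j, f a j = ∏ i, a i ^ E j i := by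
    intro a ha j
    have h1 := hprod_fin a ha j Finset.univ
    simp only [Finset.mem_univ, if_true] at h1
    rw [show (fun i => a i) = a from rfl] at h1
    rw [h1]
    exact Finset.prod_congr rfl fun i _ => hpow j i (a i) (ha i)
  -- nonnegativity of exponents via CT2
  have hEnonneg : ∀ j i, 0 ≤ E j i := by
    intro j i
    by_contra hneg
    push_neg at hneg
    set x : ℕ → ℝ := fun k => ((k : ℝ) + 1)⁻¹ with hxdef
    have hx : ∀ k, 0 < x k := fun k => by positivity
    set t₀ : Fin d → ℝ := iota i 0 with ht₀def
    have ht₀ : ∀ i', 0 ≤ t₀ i' := by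
      intro i'
      simp only [ht₀def, iota]
      split <;> norm_num
    have halim : Tendsto (fun k => iota i (x k)) atTop (𝓝 t₀) := by
      rw [tendsto_pi_nhds]
      intro i'
      by_cases hii' : i' = i
      · subst hii'
        simp only [iota, ht₀def, if_pos rfl]
        have : Tendsto (fun k : ℕ => ((k:ℝ) + 1)) atTop atTop :=
          tendsto_atTop_add_const_right _ _ tendsto_natCast_atTop_atTop
        exact this.inv_tendsto_atTop
      · simp only [iota, ht₀def, if_neg hii']
        exact tendsto_const_nhds
    have hapos : ∀ k i', 0 < iota i (x k) i' := fun k => iota_pos i (hx k)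
    have hs := hsandw j t₀ ht₀ (fun k => iota i (x k)) hapos halim
    haveI : IsProbabilityMeasure (P.map (fun ω => X t₀ ω j)) :=
      Measure.isProbabilityMeasure_map (hZmeas _ j).aemeasurable
    have hGc : IsCDF (rcdf (P.map (fun ω => X t₀ ω j))) := rcdf_isCDF _
    obtain ⟨v₁, v₂, hv0, hv12, hv21, hvq⟩ := hpair j
    have hαtop : Tendsto (fun k => f (iota i (x k)) j) atTop atTop := by
      have heq : (fun k => f (iota i (x k)) j) = fun k : ℕ => ((k:ℝ) + 1) ^ (-(E j i)) := by
        funext k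
        rw [hpow j i (x k) (hx k), hxdef]
        simp only
        rw [Real.inv_rpow (by positivity), ← Real.rpow_neg (by positivity)]
      rw [heq]
      have h3 := (tendsto_rpow_atTop (show (0:ℝ) < -(E j i) by linarith)).comp
        (tendsto_atTop_add_const_right atTop (1:ℝ)
          (tendsto_natCast_atTop_atTop : Tendsto (fun k : ℕ => (k:ℝ)) atTop atTop))
      exact h3
    exact CT2 (hFc j) hGc hs (fun k => hfpos _ (hapos k) j) hv0 hv12 hv21 hvq hαtop
  refine ⟨E, hEnonneg, hprod, ?_⟩
  -- the D part
  intro j hHj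
  obtain ⟨i₀, hi₀⟩ := Function.ne_iff.1 hHj
  have hi₀pos : 0 < E j i₀ := lt_of_le_of_ne (hEnonneg j i₀) (by simpa using (Ne.symm hi₀))
  -- the invariance of the law of X 0
  set ν : Measure ℝ := P.map (fun ω => X 0 ω j) with hνdef
  haveI : IsProbabilityMeasure ν := Measure.isProbabilityMeasure_map (hZmeas _ j).aemeasurable
  have hνmap : ∀ y : ℝ, ν (Set.Iic y) = P {ω | X 0 ω j ≤ y} := by
    intro y
    rw [hνdef, Measure.map_apply (hZmeas _ j) measurableSet_Iic]
    rfl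
  have hinv : ∀ (a : Fin d → ℝ), (∀ i, 0 < a i) →
      ∀ y : ℝ, ν (Set.Iic y) = ν (Set.Iic (f a j * y + g a j)) := by
    intro a ha y
    have h1 := step1 a ha 0 (fun _ => le_refl 0) j (f a j * y + g a j)
    rw [show a * (0 : Fin d → ℝ) = 0 from funext fun i => mul_zero _] at h1
    have e1 : {ω | f a j * X 0 ω j + g a j ≤ f a j * y + g a j} = {ω | X 0 ω j ≤ y} := by
      ext ω
      simp only [Set.mem_setOf_eq]
      constructor <;> intro hh <;> nlinarith [hfpos a ha j]
    rw [e1] at h1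
    rw [hνmap, hνmap, h1]
  -- choose a₀ with f a₀ j ≠ 1
  set a₀ : Fin d → ℝ := iota i₀ 2 with ha₀def
  have ha₀pos : ∀ i', 0 < a₀ i' := iota_pos i₀ two_pos
  have hfa₀ : f a₀ j = 2 ^ (E j i₀) := hpow j i₀ 2 two_pos
  have hfa₀gt : 1 < f a₀ j := by
    rw [hfa₀]
    rw [Real.one_lt_rpow_iff_of_pos two_pos]
    left
    exact ⟨one_lt_two, hi₀pos⟩
  have hfa₀ne : f a₀ j ≠ 1 := ne_of_gt hfa₀gt
  set D : ℝ := g a₀ j / (1 - f a₀ j) with hDdef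
  have hν₀ : ν {D} = 1 :=
    inv_affine ν (hfpos a₀ ha₀pos j) hfa₀ne (hinv a₀ ha₀pos)
  have hsingleton_unique : ∀ p : ℝ, ν {p} = 1 → p = D := by
    intro p hp
    by_contra hne
    have hdisj : Disjoint ({p} : Set ℝ) {D} := by
      simp [Set.disjoint_singleton, hne]
    have := measure_union (μ := ν) hdisj (measurableSet_singleton D)
    rw [hp, hν₀] at this
    have hle : ν ({p} ∪ {D}) ≤ 1 := prob_le_one
    rw [this] at hle
    norm_num at hle
  refine ⟨D, ?_, ?_⟩
  · intro a ha
    by_cases hfa : f a j = 1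
    · have hg0 : g a j = 0 := by
        by_contra hg
        apply inv_translate ν _ hg
        intro y
        have := hinv a ha y
        rw [hfa, one_mul] at this
        exact this
      rw [hg0, hfa]
      ring
    · have hp := inv_affine ν (hfpos a ha j) hfa (hinv a ha)
      have := hsingleton_unique _ hp
      rw [← this]
      have h1f : 1 - f a j ≠ 0 := by
        intro hh
        exact hfa (by linarith)
      field_simp
  · have hcompl : P ((fun ω => X 0 ω j) ⁻¹' {D})ᶜ = 0 := by
      have h := hν₀
      rw [hνdef, Measure.map_apply (hZmeas _ j) (measurableSet_singleton D)] at h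
      rw [measure_compl ((hZmeas 0 j) (measurableSet_singleton D)) (measure_ne_top P _), h,
        measure_univ]
      simp
    rw [ae_iff]
    have hset : {ω | ¬ X 0 ω j = D} = ((fun ω => X 0 ω j) ⁻¹' {D})ᶜ := by
      ext ω
      simp
    rw [hset]
    exact hcompl
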